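/- Let N ≥ 3 and k be integers with 2 ≤ k ≤ N. Then for all complex numbers α and β: 2·(1 + (k−1)/(N−1))·|α|² + (N−2)·(1 + (N−3)(k−1)/(N−1))·|β|² + 4(N−2)·((k−1)/(N−1))·Re(α·conj(β)) ≥ |2α + (k−2)β|² / 2. -/

import Mathlib

lemma key15 (n K x y : ℝ) (hn : 3 ≤ n) (h2 : 2 ≤ K) (hKn : K ≤ n) :
    (n - 1) * ((2 * x + (K - 2) * y) ^ 2 / 2) ≤
      2 * ((n - 1) + (K - 1)) * x ^ 2 +
        (n - 2) * ((n - 1) + (n - 3) * (K - 1)) * y ^ 2 +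
        4 * (n - 2) * (K - 1) * (x * y) := by
  nlinarith [sq_nonneg (2 * (2 * (K - 1)) * x + (4 * (n - 2) * (K - 1) - 2 * (n - 1) * (K - 2)) * y),
    mul_nonneg (mul_nonneg (mul_nonneg (by linarith : (0:ℝ) ≤ 4 * (n - 1)) (by linarith : (0:ℝ) ≤ K))
      (by linarith : (0:ℝ) ≤ K - 2)) (by linarith : (0:ℝ) ≤ n - K) |>.trans_eq (rfl : _ = 4*(n-1)*K*(K-2)*(n-K)) |> fun h => mul_nonneg h (sq_nonneg y)]

theorem stmt15 (N k : ℕ) (hN : 3 ≤ N) (hk2 : 2 ≤ k) (hkN : k ≤ N) (α β : ℂ) :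
    2 * (1 + ((k : ℝ) - 1) / ((N : ℝ) - 1)) * ‖α‖ ^ 2 +
        ((N : ℝ) - 2) * (1 + ((N : ℝ) - 3) * ((k : ℝ) - 1) / ((N : ℝ) - 1)) *
          ‖β‖ ^ 2 +
        4 * ((N : ℝ) - 2) * (((k : ℝ) - 1) / ((N : ℝ) - 1)) * (α * (starRingEnd ℂ) β).re
      ≥ ‖2 * α + ((((k : ℝ) - 2) : ℝ) : ℂ) * β‖ ^ 2 / 2 := by
  set n := (N : ℝ) with hnd
  set K := (k : ℝ) with hKd
  have hn : 3 ≤ n := by rw [hnd]; exact_mod_cast hN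
  have h2 : 2 ≤ K := by rw [hKd]; exact_mod_cast hk2
  have hKn : K ≤ n := by rw [hKd, hnd]; exact_mod_cast hkN
  have hd : (0:ℝ) < n - 1 := by linarith
  have key1 := key15 n K α.re β.re hn h2 hKn
  have key2 := key15 n K α.im β.im hn h2 hKn
  have ha : ‖α‖ ^ 2 = α.re ^ 2 + α.im ^ 2 := by
    rw [Complex.sq_norm, Complex.normSq_apply]; ring
  have hb : ‖β‖ ^ 2 = β.re ^ 2 + β.im ^ 2 := by
    rw [Complex.sq_norm, Complex.normSq_apply]; ring
  have hab : ‖2 * α + ((((K - 2) : ℝ)) : ℂ) * β‖ ^ 2 =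
      (2 * α.re + (K - 2) * β.re) ^ 2 + (2 * α.im + (K - 2) * β.im) ^ 2 := by
    rw [Complex.sq_norm, Complex.normSq_apply]
    simp [Complex.add_re, Complex.add_im, Complex.mul_re, Complex.mul_im]
    ring
  have hre : (α * (starRingEnd ℂ) β).re = α.re * β.re + α.im * β.im := by
    simp [Complex.mul_re]
  rw [ge_iff_le, ← sub_nonneg, ha, hb, hab, hre]
  have heq : 2 * (1 + (K - 1) / (n - 1)) * (α.re ^ 2 + α.im ^ 2) +
        (n - 2) * (1 + (n - 3) * (K - 1) / (n - 1)) * (β.re ^ 2 + β.im ^ 2) +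
        4 * (n - 2) * ((K - 1) / (n - 1)) * (α.re * β.re + α.im * β.im) -
        ((2 * α.re + (K - 2) * β.re) ^ 2 + (2 * α.im + (K - 2) * β.im) ^ 2) / 2 =
      ((2 * ((n - 1) + (K - 1)) * α.re ^ 2 +
          (n - 2) * ((n - 1) + (n - 3) * (K - 1)) * β.re ^ 2 +
          4 * (n - 2) * (K - 1) * (α.re * β.re) -
          (n - 1) * ((2 * α.re + (K - 2) * β.re) ^ 2 / 2)) +
        (2 * ((n - 1) + (K - 1)) * α.im ^ 2 +
          (n - 2) * ((n - 1) + (n - 3) * (K - 1)) * β.im ^ 2 +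
          4 * (n - 2) * (K - 1) * (α.im * β.im) -
          (n - 1) * ((2 * α.im + (K - 2) * β.im) ^ 2 / 2))) / (n - 1) := by
    field_simp
    ring
  rw [heq]
  apply div_nonneg _ hd.le
  linarith
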